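/- Under the LATE assumptions (independence of Z from all potential outcomes and potential treatments, monotonicity D(1) ≥ D(0), and relevance E[D|Z=1] > E[D|Z=0]), the Wald estimand with recoded binary treatment 1(D>0) satisfies: (E[Y|Z=1]−E[Y|Z=0])/(P(D>0|Z=1)−P(D>0|Z=0)) = E[Y(D(1))−Y(D(0)) | D(1)>D(0)=0] + E[Y(D(1))−Y(D(0)) | D(1)>D(0)>0] · P(D(1)>D(0)>0)/P(D(1)>D(0)=0), provided P(D(1)>D(0)=0) > 0. -/

import Mathlib

open MeasureTheory ProbabilityTheory

variable {Ω : Type*}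

/-- probability of a set -/
noncomputable def pr [MeasurableSpace Ω] (μ : MeasureTheory.Measure Ω) (A : Set Ω) : ℝ :=
  (μ A).toReal

/-- conditional probability P(A | B) -/
noncomputable def cP [MeasurableSpace Ω] (μ : MeasureTheory.Measure Ω) (A B : Set Ω) : ℝ :=
  pr μ (A ∩ B) / pr μ B

/-- conditional expectation E[f | B] -/
noncomputable def cE [MeasurableSpace Ω] (μ : MeasureTheory.Measure Ω) (f : Ω → ℝ) (B : Set Ω) : ℝ :=
  (∫ ω in B, f ω ∂μ) / pr μ B

/-- observed treatment D = Z·D(1) + (1−Z)·D(0) -/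
def obsD (Z D0 D1 : Ω → ℕ) : Ω → ℕ := fun ω => if Z ω = 1 then D1 ω else D0 ω

/-- observed outcome Y = Y(D) -/
noncomputable def obsY (Z D0 D1 : Ω → ℕ) (Yp : ℕ → Ω → ℝ) : Ω → ℝ :=
  fun ω => Yp (obsD Z D0 D1 ω) ω

lemma aux_setIntegral_indep [MeasurableSpace Ω] (μ : MeasureTheory.Measure Ω)
    [IsProbabilityMeasure μ] {W : Ω → ℝ} {Z : Ω → ℕ} (hZm : Measurable Z)
    (hWi : Integrable W μ) (hWZ : IndepFun W Z μ) (i : ℕ) :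
    ∫ ω in {ω | Z ω = i}, W ω ∂μ = pr μ {ω | Z ω = i} * ∫ ω, W ω ∂μ := by
  have hset : MeasurableSet {ω | Z ω = i} := hZm (measurableSet_singleton i)
  set g : ℕ → ℝ := fun n => if n = i then 1 else 0 with hgdef
  have hgm : Measurable g := measurable_from_top
  have hWg : IndepFun W (g ∘ Z) μ := by
    have h := hWZ.comp measurable_id hgm
    exact h
  have hgZeq : (g ∘ Z) = Set.indicator {ω | Z ω = i} (fun _ => (1:ℝ)) := by
    funext ω
    by_cases h : Z ω = i <;> simp [hgdef, Set.indicator_apply, h]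
  have hgZint : Integrable (g ∘ Z) μ := by
    rw [hgZeq]; exact (integrable_const 1).indicator hset
  have hmul := hWg.integral_mul_eq_mul_integral hWi.aestronglyMeasurable hgZint.aestronglyMeasurable
  have hL : (W * (g ∘ Z)) = Set.indicator {ω | Z ω = i} W := by
    funext ω
    by_cases h : Z ω = i <;>
      simp [hgdef, Set.indicator_apply, h, Pi.mul_apply, Function.comp]
  have hR : ∫ ω, (g ∘ Z) ω ∂μ = pr μ {ω | Z ω = i} := by
    rw [hgZeq]
    have := integral_indicator_one (μ := μ) hset
    simpa [pr, Pi.one_def, Measure.real] using this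
  rw [← integral_indicator hset, ← hL, hmul, hR]
  ring

lemma aux_pr_inter [MeasurableSpace Ω] (μ : MeasureTheory.Measure Ω)
    [IsProbabilityMeasure μ] {S : Set Ω} {Z : Ω → ℕ} (hZm : Measurable Z)
    (hS : MeasurableSet S)
    (hind : IndepFun (S.indicator (fun _ => (1:ℝ))) Z μ) (i : ℕ) :
    pr μ (S ∩ {ω | Z ω = i}) = pr μ S * pr μ {ω | Z ω = i} := by
  have h := aux_setIntegral_indep μ hZm ((integrable_const 1).indicator hS) hind i
  rw [setIntegral_indicator hS, Set.inter_comm] at h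
  have h1 : ∫ ω in S ∩ {ω | Z ω = i}, (1:ℝ) ∂μ = pr μ (S ∩ {ω | Z ω = i}) := by
    simp [pr, Measure.real]
  have h2 : ∫ ω, S.indicator (fun _ => (1:ℝ)) ω ∂μ = pr μ S := by
    have := integral_indicator_one (μ := μ) hS
    simpa [pr, Pi.one_def, Measure.real] using this
  rw [h1, h2] at h
  rw [h]; ring

/-- the recoded Wald estimand decomposes into extensive and
intensive margin components. -/
theorem recoded_wald_decomposition
    [MeasurableSpace Ω] (μ : MeasureTheory.Measure Ω) [IsProbabilityMeasure μ]
    (Dbar : ℕ) (Z D0 D1 : Ω → ℕ) (Yp : ℕ → Ω → ℝ)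
    (hZ01 : ∀ ω, Z ω = 0 ∨ Z ω = 1)
    (hZm : Measurable Z) (hD0m : Measurable D0) (hD1m : Measurable D1)
    (hD0b : ∀ ω, D0 ω ≤ Dbar) (hD1b : ∀ ω, D1 ω ≤ Dbar)
    (hYm : ∀ d, Measurable (Yp d)) (hYint : ∀ d, Integrable (Yp d) μ)
    (hindep : IndepFun (fun ω => (D0 ω, D1 ω, fun d => Yp d ω)) Z μ)
    (hmono : ∀ᵐ ω ∂μ, D0 ω ≤ D1 ω)
    (hrel : cE μ (fun ω => (obsD Z D0 D1 ω : ℝ)) {ω | Z ω = 1} >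
            cE μ (fun ω => (obsD Z D0 D1 ω : ℝ)) {ω | Z ω = 0})
    (hZ1pos : 0 < pr μ {ω | Z ω = 1}) (hZ1lt : pr μ {ω | Z ω = 1} < 1)
    (hext : 0 < pr μ {ω | D0 ω = 0 ∧ 0 < D1 ω}) :
    (cE μ (obsY Z D0 D1 Yp) {ω | Z ω = 1} - cE μ (obsY Z D0 D1 Yp) {ω | Z ω = 0}) /
      (cP μ {ω | 0 < obsD Z D0 D1 ω} {ω | Z ω = 1} -
        cP μ {ω | 0 < obsD Z D0 D1 ω} {ω | Z ω = 0}) =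
    cE μ (fun ω => Yp (D1 ω) ω - Yp (D0 ω) ω) {ω | D0 ω = 0 ∧ 0 < D1 ω} +
      cE μ (fun ω => Yp (D1 ω) ω - Yp (D0 ω) ω) {ω | 0 < D0 ω ∧ D0 ω < D1 ω} *
        (pr μ {ω | 0 < D0 ω ∧ D0 ω < D1 ω} / pr μ {ω | D0 ω = 0 ∧ 0 < D1 ω}) := by
  classical
  -- basic measurable sets
  have hS1m : MeasurableSet {ω | Z ω = 1} := hZm (measurableSet_singleton 1)
  have hS0m : MeasurableSet {ω | Z ω = 0} := hZm (measurableSet_singleton 0)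
  set X : Ω → ℕ × ℕ × (ℕ → ℝ) := fun ω => (D0 ω, D1 ω, fun d => Yp d ω) with hXdef
  have hXm : Measurable X :=
    hD0m.prodMk (hD1m.prodMk (measurable_pi_lambda _ fun d => hYm d))
  have hindepφ : ∀ {φ : ℕ × ℕ × (ℕ → ℝ) → ℝ}, Measurable φ →
      IndepFun (fun ω => φ (X ω)) Z μ := by
    intro φ hφ
    have h := hindep.comp hφ measurable_id
    exact h
  -- the two potential-outcome compositions
  set W1 : Ω → ℝ := fun ω => Yp (D1 ω) ω with hW1def
  set W0 : Ω → ℝ := fun ω => Yp (D0 ω) ω with hW0def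
  set φ1 : ℕ × ℕ × (ℕ → ℝ) → ℝ :=
    fun t => ∑ d ∈ Finset.range (Dbar + 1), if t.2.1 = d then t.2.2 d else 0 with hφ1def
  set φ0 : ℕ × ℕ × (ℕ → ℝ) → ℝ :=
    fun t => ∑ d ∈ Finset.range (Dbar + 1), if t.1 = d then t.2.2 d else 0 with hφ0def
  have hφ1m : Measurable φ1 := by
    apply Finset.measurable_sum
    intro d _
    exact Measurable.ite ((measurable_fst.comp measurable_snd) (measurableSet_singleton d))
      ((measurable_pi_apply d).comp (measurable_snd.comp measurable_snd)) measurable_const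
  have hφ0m : Measurable φ0 := by
    apply Finset.measurable_sum
    intro d _
    exact Measurable.ite (measurable_fst (measurableSet_singleton d))
      ((measurable_pi_apply d).comp (measurable_snd.comp measurable_snd)) measurable_const
  have hW1eq : W1 = fun ω => φ1 (X ω) := by
    funext ω
    simp only [hW1def, hφ1def, hXdef]
    rw [Finset.sum_ite_eq (Finset.range (Dbar + 1)) (D1 ω) (fun d => Yp d ω)]
    simp [Finset.mem_range, Nat.lt_succ_of_le (hD1b ω)]
  have hW0eq : W0 = fun ω => φ0 (X ω) := by
    funext ω
    simp only [hW0def, hφ0def, hXdef]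
    rw [Finset.sum_ite_eq (Finset.range (Dbar + 1)) (D0 ω) (fun d => Yp d ω)]
    simp [Finset.mem_range, Nat.lt_succ_of_le (hD0b ω)]
  have hW1ind : IndepFun W1 Z μ := by rw [hW1eq]; exact hindepφ hφ1m
  have hW0ind : IndepFun W0 Z μ := by rw [hW0eq]; exact hindepφ hφ0m
  have hW1int : Integrable W1 μ := by
    have h : W1 = fun ω => ∑ d ∈ Finset.range (Dbar + 1),
        Set.indicator {ω' | D1 ω' = d} (Yp d) ω := by
      funext ω
      have hi : ∀ d, Set.indicator {ω' | D1 ω' = d} (Yp d) ω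
          = if D1 ω = d then Yp d ω else 0 := by
        intro d; simp [Set.indicator_apply, Set.mem_setOf_eq]
      simp only [hi, hW1def]
      rw [Finset.sum_ite_eq (Finset.range (Dbar + 1)) (D1 ω) (fun d => Yp d ω)]
      simp [Finset.mem_range, Nat.lt_succ_of_le (hD1b ω)]
    rw [h]
    exact integrable_finset_sum _ fun d _ =>
      (hYint d).indicator (hD1m (measurableSet_singleton d))
  have hW0int : Integrable W0 μ := by
    have h : W0 = fun ω => ∑ d ∈ Finset.range (Dbar + 1),
        Set.indicator {ω' | D0 ω' = d} (Yp d) ω := by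
      funext ω
      have hi : ∀ d, Set.indicator {ω' | D0 ω' = d} (Yp d) ω
          = if D0 ω = d then Yp d ω else 0 := by
        intro d; simp [Set.indicator_apply, Set.mem_setOf_eq]
      simp only [hi, hW0def]
      rw [Finset.sum_ite_eq (Finset.range (Dbar + 1)) (D0 ω) (fun d => Yp d ω)]
      simp [Finset.mem_range, Nat.lt_succ_of_le (hD0b ω)]
    rw [h]
    exact integrable_finset_sum _ fun d _ =>
      (hYint d).indicator (hD0m (measurableSet_singleton d))
  -- conditional expectations of outcome
  set p := pr μ {ω | Z ω = 1} with hpdef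
  have hI1 : cE μ (obsY Z D0 D1 Yp) {ω | Z ω = 1} = ∫ ω, W1 ω ∂μ := by
    have hcongr : ∫ ω in {ω | Z ω = 1}, obsY Z D0 D1 Yp ω ∂μ
        = ∫ ω in {ω | Z ω = 1}, W1 ω ∂μ := by
      apply setIntegral_congr_fun hS1m
      intro ω hω
      simp only [Set.mem_setOf_eq] at hω
      simp [obsY, obsD, hω, hW1def]
    rw [cE, hcongr, aux_setIntegral_indep μ hZm hW1int hW1ind 1]
    have hp0 : pr μ {ω | Z ω = 1} ≠ 0 := ne_of_gt hZ1pos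
    field_simp
  have hI0 : cE μ (obsY Z D0 D1 Yp) {ω | Z ω = 0} = ∫ ω, W0 ω ∂μ := by
    have hq : 0 < pr μ {ω | Z ω = 0} := by
      have hcompl : {ω | Z ω = 0} = {ω | Z ω = 1}ᶜ := by
        ext ω; rcases hZ01 ω with h | h <;> simp [h]
      have : pr μ {ω | Z ω = 0} = 1 - p := by
        rw [hcompl, pr, measure_compl hS1m (measure_ne_top μ _), measure_univ,
          ENNReal.toReal_sub_of_le prob_le_one ENNReal.one_ne_top]
        simp [hpdef, pr]
      rw [this]; linarith
    have hcongr : ∫ ω in {ω | Z ω = 0}, obsY Z D0 D1 Yp ω ∂μ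
        = ∫ ω in {ω | Z ω = 0}, W0 ω ∂μ := by
      apply setIntegral_congr_fun hS0m
      intro ω hω
      simp only [Set.mem_setOf_eq] at hω
      simp [obsY, obsD, hω, hW0def]
    rw [cE, hcongr, aux_setIntegral_indep μ hZm hW0int hW0ind 0]
    field_simp
  -- conditional probabilities of treatment
  have hT1m : MeasurableSet {ω | 0 < D1 ω} :=
    (hD1m.prodMk hD1m) ((Set.to_countable _).measurableSet :
      MeasurableSet {t : ℕ × ℕ | 0 < t.1})
  have hT0m : MeasurableSet {ω | 0 < D0 ω} :=
    (hD0m.prodMk hD0m) ((Set.to_countable _).measurableSet :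
      MeasurableSet {t : ℕ × ℕ | 0 < t.1})
  have hind1 : IndepFun (Set.indicator {ω | 0 < D1 ω} (fun _ => (1:ℝ))) Z μ := by
    have heq : Set.indicator {ω | 0 < D1 ω} (fun _ => (1:ℝ))
        = fun ω => (fun t : ℕ × ℕ × (ℕ → ℝ) => if 0 < t.2.1 then (1:ℝ) else 0) (X ω) := by
      funext ω
      by_cases h : 0 < D1 ω <;> simp [Set.indicator_apply, h, hXdef]
    rw [heq]
    exact hindepφ ((measurable_from_top (f := fun n : ℕ => if 0 < n then (1:ℝ) else 0)).comp
      (measurable_fst.comp measurable_snd))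
  have hind0 : IndepFun (Set.indicator {ω | 0 < D0 ω} (fun _ => (1:ℝ))) Z μ := by
    have heq : Set.indicator {ω | 0 < D0 ω} (fun _ => (1:ℝ))
        = fun ω => (fun t : ℕ × ℕ × (ℕ → ℝ) => if 0 < t.1 then (1:ℝ) else 0) (X ω) := by
      funext ω
      by_cases h : 0 < D0 ω <;> simp [Set.indicator_apply, h, hXdef]
    rw [heq]
    exact hindepφ ((measurable_from_top (f := fun n : ℕ => if 0 < n then (1:ℝ) else 0)).comp
      measurable_fst)
  have hcP1 : cP μ {ω | 0 < obsD Z D0 D1 ω} {ω | Z ω = 1} = pr μ {ω | 0 < D1 ω} := by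
    have hseteq : {ω | 0 < obsD Z D0 D1 ω} ∩ {ω | Z ω = 1}
        = {ω | 0 < D1 ω} ∩ {ω | Z ω = 1} := by
      ext ω; by_cases h : Z ω = 1 <;> simp [obsD, h]
    rw [cP, hseteq, aux_pr_inter μ hZm hT1m hind1 1]
    have hp0 : pr μ {ω | Z ω = 1} ≠ 0 := ne_of_gt hZ1pos
    field_simp
  have hcP0 : cP μ {ω | 0 < obsD Z D0 D1 ω} {ω | Z ω = 0} = pr μ {ω | 0 < D0 ω} := by
    have hq : 0 < pr μ {ω | Z ω = 0} := by
      have hcompl : {ω | Z ω = 0} = {ω | Z ω = 1}ᶜ := by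
        ext ω; rcases hZ01 ω with h | h <;> simp [h]
      have : pr μ {ω | Z ω = 0} = 1 - p := by
        rw [hcompl, pr, measure_compl hS1m (measure_ne_top μ _), measure_univ,
          ENNReal.toReal_sub_of_le prob_le_one ENNReal.one_ne_top]
        simp [hpdef, pr]
      rw [this]; linarith
    have hseteq : {ω | 0 < obsD Z D0 D1 ω} ∩ {ω | Z ω = 0}
        = {ω | 0 < D0 ω} ∩ {ω | Z ω = 0} := by
      ext ω; rcases hZ01 ω with h | h <;> simp [obsD, h]
    rw [cP, hseteq, aux_pr_inter μ hZm hT0m hind0 0]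
    field_simp
  -- the denominator equals pr A
  set A := {ω | D0 ω = 0 ∧ 0 < D1 ω} with hAdef
  set B := {ω | 0 < D0 ω ∧ D0 ω < D1 ω} with hBdef
  set T := {ω | 0 < D0 ω ∧ 0 < D1 ω} with hTdef
  have hAm : MeasurableSet A :=
    (hD0m.prodMk hD1m) ((Set.to_countable _).measurableSet :
      MeasurableSet {t : ℕ × ℕ | t.1 = 0 ∧ 0 < t.2})
  have hBm : MeasurableSet B :=
    (hD0m.prodMk hD1m) ((Set.to_countable _).measurableSet :
      MeasurableSet {t : ℕ × ℕ | 0 < t.1 ∧ t.1 < t.2})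
  have hTm : MeasurableSet T :=
    (hD0m.prodMk hD1m) ((Set.to_countable _).measurableSet :
      MeasurableSet {t : ℕ × ℕ | 0 < t.1 ∧ 0 < t.2})
  have hden : pr μ {ω | 0 < D1 ω} - pr μ {ω | 0 < D0 ω} = pr μ A := by
    have hsplit : {ω | 0 < D1 ω} = A ∪ T := by
      ext ω
      simp only [hAdef, hTdef, Set.mem_setOf_eq, Set.mem_union]
      omega
    have hdisj : Disjoint A T := by
      rw [Set.disjoint_left]
      intro ω hA hT
      simp only [hAdef, Set.mem_setOf_eq] at hA
      simp only [hTdef, Set.mem_setOf_eq] at hT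
      omega
    have h1 : pr μ {ω | 0 < D1 ω} = pr μ A + pr μ T := by
      rw [hsplit, pr, measure_union hdisj hTm,
        ENNReal.toReal_add (measure_ne_top μ _) (measure_ne_top μ _)]
      rfl
    have h0 : pr μ {ω | 0 < D0 ω} = pr μ T := by
      have hae : {ω | 0 < D0 ω} =ᵐ[μ] T := by
        filter_upwards [hmono] with ω hle
        show (0 < D0 ω) = (0 < D0 ω ∧ 0 < D1 ω)
        exact propext (by omega)
      rw [pr, pr, measure_congr hae]
    rw [h1, h0]; ring
  -- numerator decomposition
  set f : Ω → ℝ := fun ω => Yp (D1 ω) ω - Yp (D0 ω) ω with hfdef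
  have hfint : Integrable f μ := hW1int.sub hW0int
  have hABdisj : Disjoint A B := by
    rw [Set.disjoint_left]
    intro ω hA hB
    simp only [hAdef, Set.mem_setOf_eq] at hA
    simp only [hBdef, Set.mem_setOf_eq] at hB
    omega
  have hsplit : ∫ ω, f ω ∂μ = (∫ ω in A, f ω ∂μ) + ∫ ω in B, f ω ∂μ := by
    have h1 : (∫ ω in A ∪ B, f ω ∂μ) + ∫ ω in (A ∪ B)ᶜ, f ω ∂μ = ∫ ω, f ω ∂μ :=
      integral_add_compl (hAm.union hBm) hfint
    have h2 : ∫ ω in (A ∪ B)ᶜ, f ω ∂μ = 0 := by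
      rw [setIntegral_congr_ae (hAm.union hBm).compl
        (g := fun _ => (0:ℝ)) ?_]
      · simp
      · filter_upwards [hmono] with ω hle hmem
        simp only [Set.mem_compl_iff, Set.mem_union, hAdef, hBdef,
          Set.mem_setOf_eq, not_or] at hmem
        have heq : D1 ω = D0 ω := by omega
        simp [hfdef, heq]
    have h3 : ∫ ω in A ∪ B, f ω ∂μ = (∫ ω in A, f ω ∂μ) + ∫ ω in B, f ω ∂μ :=
      setIntegral_union hABdisj hBm hfint.integrableOn hfint.integrableOn
    linarith
  have hnum : (∫ ω, W1 ω ∂μ) - ∫ ω, W0 ω ∂μ = ∫ ω, f ω ∂μ := by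
    rw [hfdef]
    exact (integral_sub hW1int hW0int).symm
  -- put everything together
  rw [hI1, hI0, hcP1, hcP0, hden, hnum, hsplit]
  rw [cE, cE]
  have hApos : 0 < pr μ A := hext
  have hBnn : 0 ≤ pr μ B := ENNReal.toReal_nonneg
  by_cases hB0 : pr μ B = 0
  · have hμB : μ B = 0 := by
      rw [pr] at hB0
      exact (ENNReal.toReal_eq_zero_iff _).mp hB0 |>.resolve_right (measure_ne_top μ _)
    have hintB : ∫ ω in B, f ω ∂μ = 0 := by
      rw [Measure.restrict_eq_zero.mpr hμB, integral_zero_measure]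
    rw [hintB, hB0]
    simp
  · field_simp
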